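/- arXiv:1906.07334 — 3 statements merged into one kernel-verified Lean document; each statement's English description precedes it below -/
import Mathlib

section
/- If y(k) → y_r, u(k) → u_r, x(k+1) = A x(k) + B u(k), y(k) = C x(k), the pair (A, C) is detectable, and x_r, u_r, y_r satisfy x_r = A x_r + B u_r and y_r = C x_r, then x(k) → x_r. -/
open Filter
open scoped NNReal ENNReal

attribute [local instance] Matrix.linftyOpNormedAddCommGroup Matrix.linftyOpNormedRing Matrix.linftyOpNormedAlgebra

lemma aux_pow_norm_geom {A : Type*} [NormedRing A] [NormedAlgebra ℂ A] [CompleteSpace A]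
    [Nontrivial A] (a : A) (h : ∀ μ ∈ spectrum ℂ a, ‖μ‖ < 1) :
    ∃ c r : ℝ, 0 ≤ c ∧ 0 < r ∧ r < 1 ∧ ∀ k, ‖a ^ k‖ ≤ c * r ^ k := by
  have hρ : spectralRadius ℂ a < ((1 : ℝ≥0) : ℝ≥0∞) :=
    spectrum.spectralRadius_lt_of_forall_lt a (fun z hz => by
      have := h z hz
      rw [← coe_nnnorm] at this
      exact_mod_cast this)
  rw [ENNReal.coe_one] at hρ
  obtain ⟨r, hρr, hr1⟩ := ENNReal.lt_iff_exists_nnreal_btwn.1 hρ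
  have hr0 : 0 < r := by
    rcases eq_or_lt_of_le (zero_le : (0 : ℝ≥0) ≤ r) with h0 | h0
    · exfalso; rw [← h0] at hρr; simp at hρr
    · exact h0
  have hr1' : (r : ℝ) < 1 := by exact_mod_cast ENNReal.coe_lt_one_iff.mp hr1
  have htend := spectrum.pow_nnnorm_pow_one_div_tendsto_nhds_spectralRadius a
  have hev : ∀ᶠ k : ℕ in atTop, (‖a ^ k‖₊ : ℝ≥0∞) ^ (1 / (k : ℝ)) < (r : ℝ≥0∞) :=
    htend.eventually_lt_const hρr
  obtain ⟨N, hN⟩ := eventually_atTop.1 hev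
  have key : ∀ k, N + 1 ≤ k → ‖a ^ k‖ ≤ (r : ℝ) ^ k := by
    intro k hk
    have hkpos : 0 < k := lt_of_lt_of_le (Nat.succ_pos N) hk
    have hk0 : (k : ℝ) ≠ 0 := Nat.cast_ne_zero.mpr hkpos.ne'
    have h1 := (hN k (le_of_lt (Nat.lt_of_lt_of_le (Nat.lt_succ_self N) hk))).le
    have h2 : ((‖a ^ k‖₊ : ℝ≥0∞) ^ (1 / (k : ℝ))) ^ (k : ℝ) ≤ (r : ℝ≥0∞) ^ (k : ℝ) :=
      ENNReal.rpow_le_rpow h1 (Nat.cast_nonneg k)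
    rw [← ENNReal.rpow_mul, one_div, inv_mul_cancel₀ hk0, ENNReal.rpow_one,
      ENNReal.rpow_natCast, ← ENNReal.coe_pow, ENNReal.coe_le_coe] at h2
    calc ‖a ^ k‖ = ((‖a ^ k‖₊ : ℝ≥0) : ℝ) := (coe_nnnorm _).symm
    _ ≤ ((r ^ k : ℝ≥0) : ℝ) := by exact_mod_cast h2
    _ = (r : ℝ) ^ k := by push_cast; ring
  -- now build the constant
  set c : ℝ := (∑ j ∈ Finset.range (N + 1), ‖a ^ j‖ / (r : ℝ) ^ j) + 1 with hc
  have hrpos : (0:ℝ) < r := by exact_mod_cast hr0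
  have hsum_nonneg : 0 ≤ ∑ j ∈ Finset.range (N + 1), ‖a ^ j‖ / (r : ℝ) ^ j :=
    Finset.sum_nonneg fun j _ => div_nonneg (norm_nonneg _) (by positivity)
  have hc1 : 1 ≤ c := by simp [hc]; linarith
  refine ⟨c, r, by linarith, hrpos, hr1', fun k => ?_⟩
  rcases le_or_gt (N + 1) k with hk | hk
  · calc ‖a ^ k‖ ≤ (r:ℝ) ^ k := key k hk
    _ = 1 * (r:ℝ) ^ k := (one_mul _).symm
    _ ≤ c * (r:ℝ) ^ k := by
        exact mul_le_mul_of_nonneg_right hc1 (by positivity)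
  · have hmem : k ∈ Finset.range (N + 1) := Finset.mem_range.mpr hk
    have hle : ‖a ^ k‖ / (r:ℝ) ^ k ≤ c := by
      have := Finset.single_le_sum
        (f := fun j => ‖a ^ j‖ / (r : ℝ) ^ j)
        (fun j _ => div_nonneg (norm_nonneg _) (by positivity)) hmem
      linarith
    have := mul_le_mul_of_nonneg_right hle (le_of_lt (pow_pos hrpos k))
    rwa [div_mul_cancel₀] at this
    positivity


lemma aux_tendsto_zero_of_geom_rec {r : ℝ} (hr0 : 0 ≤ r) (hr1 : r < 1)
    (v b : ℕ → ℝ) (hb0 : ∀ k, 0 ≤ b k) (hv : Tendsto v atTop (nhds 0))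
    (hrec : ∀ k, b (k + 1) ≤ r * b k + v k) : Tendsto b atTop (nhds 0) := by
  rw [Metric.tendsto_atTop]
  intro ε hε
  have hδ : (0:ℝ) < (1 - r) * ε / 2 := by nlinarith
  obtain ⟨N, hN⟩ := Metric.tendsto_atTop.1 hv ((1 - r) * ε / 2) hδ
  have hvN : ∀ k, N ≤ k → v k < (1 - r) * ε / 2 := by
    intro k hk
    have := hN k hk
    rw [Real.dist_eq, sub_zero] at this
    exact lt_of_le_of_lt (le_abs_self _) this
  have claim : ∀ j, b (N + j) ≤ r ^ j * b N + ε / 2 := by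
    intro j
    induction j with
    | zero => simp; linarith
    | succ j ih =>
      have h1 : b (N + j + 1) ≤ r * b (N + j) + v (N + j) := hrec (N + j)
      have h2 : v (N + j) < (1 - r) * ε / 2 := hvN (N + j) (Nat.le_add_right N j)
      have h3 : r * b (N + j) ≤ r * (r ^ j * b N + ε / 2) :=
        mul_le_mul_of_nonneg_left ih hr0
      have : b (N + (j + 1)) = b (N + j + 1) := by ring_nf
      rw [this]
      have hrε : r * (ε / 2) ≤ ε / 2 := by nlinarith
      calc b (N + j + 1) ≤ r * (r ^ j * b N + ε / 2) + v (N + j) := by linarith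
        _ ≤ r ^ (j + 1) * b N + ε / 2 := by rw [pow_succ]; nlinarith [h2, hrε]
  have hpow : Tendsto (fun j : ℕ => r ^ j * b N) atTop (nhds 0) := by
    simpa using (tendsto_pow_atTop_nhds_zero_of_lt_one hr0 hr1).mul_const (b N)
  obtain ⟨J, hJ⟩ := Metric.tendsto_atTop.1 hpow (ε / 2) (by linarith)
  have hJ' : r ^ J * b N < ε / 2 := by
    have := hJ J le_rfl
    rw [Real.dist_eq, sub_zero] at this
    exact lt_of_le_of_lt (le_abs_self _) this
  refine ⟨N + J, fun k hk => ?_⟩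
  rw [Real.dist_eq, sub_zero, abs_of_nonneg (hb0 k)]
  have hkN : k = N + (k - N) := by omega
  have h1 : b k ≤ r ^ (k - N) * b N + ε / 2 := by
    have := claim (k - N); rwa [← hkN] at this
  have h2 : r ^ (k - N) * b N ≤ r ^ J * b N := by
    apply mul_le_mul_of_nonneg_right _ (hb0 N)
    exact pow_le_pow_of_le_one hr0 hr1.le (by omega)
  linarith


lemma aux_norm_map {n : ℕ} (P : Matrix (Fin n) (Fin n) ℝ) :
    ‖P.map (algebraMap ℝ ℂ)‖ = ‖P‖ := by
  rw [← coe_nnnorm, ← coe_nnnorm]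
  congr 1
  simp [Matrix.linfty_opNNNorm_def, Matrix.map_apply, Complex.coe_algebraMap,
    Complex.nnnorm_real]

/-- If y(k) → y_r, u(k) → u_r along the linear dynamics and (A, C) is detectable,
then x(k) → x_r where (x_r, u_r, y_r) is a steady state. -/
theorem state_convergence_from_output {n m p : ℕ}
    (A : Matrix (Fin n) (Fin n) ℝ) (B : Matrix (Fin n) (Fin m) ℝ) (C : Matrix (Fin p) (Fin n) ℝ)
    (hdet : ∃ L : Matrix (Fin n) (Fin p) ℝ,
      ∀ μ ∈ spectrum ℂ ((A - L * C).map (algebraMap ℝ ℂ)), ‖μ‖ < 1)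
    (x : ℕ → Fin n → ℝ) (u : ℕ → Fin m → ℝ) (y : ℕ → Fin p → ℝ)
    (xr : Fin n → ℝ) (ur : Fin m → ℝ) (yr : Fin p → ℝ)
    (hdyn : ∀ k, x (k + 1) = A.mulVec (x k) + B.mulVec (u k))
    (hout : ∀ k, y k = C.mulVec (x k))
    (hss : xr = A.mulVec xr + B.mulVec ur) (hssy : yr = C.mulVec xr)
    (hy : Filter.Tendsto y Filter.atTop (nhds yr))
    (hu : Filter.Tendsto u Filter.atTop (nhds ur)) :
    Filter.Tendsto x Filter.atTop (nhds xr) := by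
  rcases Nat.eq_zero_or_pos n with hn | hn
  · subst hn
    have hx : x = fun _ => xr := funext fun k => funext fun i => i.elim0
    rw [hx]; exact tendsto_const_nhds
  obtain ⟨L, hL⟩ := hdet
  set M : Matrix (Fin n) (Fin n) ℝ := A - L * C with hM
  set w : ℕ → Fin n → ℝ := fun k => L.mulVec (y k - yr) + B.mulVec (u k - ur) with hw_def
  -- error recurrence
  have hrec : ∀ k, x (k + 1) - xr = M.mulVec (x k - xr) + w k := by
    intro k
    have expand : M.mulVec (x k - xr) + w k
        = A.mulVec (x k) + B.mulVec (u k) - (A.mulVec xr + B.mulVec ur) := by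
      rw [hw_def]
      simp only [hout k, hssy, hM]
      simp only [Matrix.sub_mulVec, Matrix.mulVec_sub, ← Matrix.mulVec_mulVec]
      abel
    rw [expand, ← hdyn k, ← hss]
  -- w tends to zero
  have hy0 : Tendsto (fun k => y k - yr) atTop (nhds 0) := by
    simpa using hy.sub (tendsto_const_nhds (x := yr))
  have hu0 : Tendsto (fun k => u k - ur) atTop (nhds 0) := by
    simpa using hu.sub (tendsto_const_nhds (x := ur))
  have h1 : Tendsto (fun k => L.mulVec (y k - yr)) atTop (nhds 0) := by
    rw [tendsto_zero_iff_norm_tendsto_zero]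
    refine squeeze_zero (fun k => norm_nonneg _)
      (fun k => Matrix.linfty_opNorm_mulVec _ _) ?_
    simpa using (hy0.norm).const_mul ‖L‖
  have h2 : Tendsto (fun k => B.mulVec (u k - ur)) atTop (nhds 0) := by
    rw [tendsto_zero_iff_norm_tendsto_zero]
    refine squeeze_zero (fun k => norm_nonneg _)
      (fun k => Matrix.linfty_opNorm_mulVec _ _) ?_
    simpa using (hu0.norm).const_mul ‖B‖
  have hw : Tendsto w atTop (nhds 0) := by
    simpa using h1.add h2
  -- geometric bound on powers
  haveI : Nonempty (Fin n) := ⟨⟨0, hn⟩⟩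
  haveI : Nontrivial (Matrix (Fin n) (Fin n) ℂ) := by
    refine ⟨0, 1, fun h => ?_⟩
    have := congrFun (congrFun h ⟨0, hn⟩) ⟨0, hn⟩
    simp [Matrix.one_apply_eq] at this
  obtain ⟨c, r, hc0, hr0, hr1, hpow⟩ := aux_pow_norm_geom (M.map (algebraMap ℝ ℂ)) hL
  have hpowR : ∀ k, ‖M ^ k‖ ≤ c * r ^ k := by
    intro k
    have hmap : (M.map (algebraMap ℝ ℂ)) ^ k = (M ^ k).map (algebraMap ℝ ℂ) := by
      simp only [← RingHom.mapMatrix_apply, ← map_pow]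
    have := hpow k
    rwa [hmap, aux_norm_map] at this
  -- closed form
  have hclosed : ∀ k, x k - xr = (M ^ k).mulVec (x 0 - xr)
      + ∑ j ∈ Finset.range k, (M ^ (k - 1 - j)).mulVec (w j) := by
    intro k
    induction k with
    | zero => simp [Matrix.one_mulVec]
    | succ k ih =>
      rw [hrec k, ih, Matrix.mulVec_add, Matrix.mulVec_mulVec, ← pow_succ']
      have hdist : M.mulVec (∑ j ∈ Finset.range k, (M ^ (k - 1 - j)).mulVec (w j))
          = ∑ j ∈ Finset.range k, (M ^ (k - j)).mulVec (w j) := by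
        simp only [← Matrix.mulVecLin_apply, map_sum]
        refine Finset.sum_congr rfl fun j hj => ?_
        simp only [Matrix.mulVecLin_apply, Matrix.mulVec_mulVec, ← pow_succ']
        have hkj : k - 1 - j + 1 = k - j := by
          have := Finset.mem_range.mp hj; omega
        rw [hkj]
      rw [hdist, Finset.sum_range_succ]
      have hlast : (k + 1) - 1 - k = 0 := by omega
      have hexp : ∀ j, (k + 1) - 1 - j = k - j := fun j => by omega
      simp only [hexp, hlast]
      simp [Matrix.one_mulVec, add_assoc, Nat.sub_self]
  -- geometric convolution bound
  set bfun : ℕ → ℝ := fun k => ∑ j ∈ Finset.range k, c * r ^ (k - 1 - j) * ‖w j‖ with hbfun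
  have hb0 : ∀ k, 0 ≤ bfun k := fun k =>
    Finset.sum_nonneg fun j _ => by positivity
  have hbrec : ∀ k, bfun (k + 1) = r * bfun k + c * ‖w k‖ := by
    intro k
    rw [hbfun]
    simp only [Finset.sum_range_succ]
    rw [Finset.mul_sum]
    have hlast : (k + 1) - 1 - k = 0 := by omega
    rw [hlast, pow_zero]
    have : ∀ j ∈ Finset.range k,
        c * r ^ ((k + 1) - 1 - j) * ‖w j‖ = r * (c * r ^ (k - 1 - j) * ‖w j‖) := by
      intro j hj
      have hjk := Finset.mem_range.mp hj
      have hkj : (k + 1) - 1 - j = (k - 1 - j) + 1 := by omega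
      rw [hkj, pow_succ]; ring
    rw [Finset.sum_congr rfl this]
    ring
  have hv0 : Tendsto (fun k => c * ‖w k‖) atTop (nhds 0) := by
    simpa using (hw.norm).const_mul c
  have hbtend : Tendsto bfun atTop (nhds 0) :=
    aux_tendsto_zero_of_geom_rec hr0.le hr1 (fun k => c * ‖w k‖) bfun hb0 hv0
      (fun k => le_of_eq (hbrec k))
  -- squeeze
  have hbound : ∀ k, ‖x k - xr‖ ≤ c * r ^ k * ‖x 0 - xr‖ + bfun k := by
    intro k
    rw [hclosed k]
    refine le_trans (norm_add_le _ _) (add_le_add ?_ ?_)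
    · calc ‖(M ^ k).mulVec (x 0 - xr)‖ ≤ ‖M ^ k‖ * ‖x 0 - xr‖ :=
            Matrix.linfty_opNorm_mulVec _ _
        _ ≤ c * r ^ k * ‖x 0 - xr‖ :=
            mul_le_mul_of_nonneg_right (hpowR k) (norm_nonneg _)
    · refine le_trans (norm_sum_le _ _) (Finset.sum_le_sum fun j _ => ?_)
      calc ‖(M ^ (k - 1 - j)).mulVec (w j)‖ ≤ ‖M ^ (k - 1 - j)‖ * ‖w j‖ :=
            Matrix.linfty_opNorm_mulVec _ _
        _ ≤ c * r ^ (k - 1 - j) * ‖w j‖ :=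
            mul_le_mul_of_nonneg_right (hpowR _) (norm_nonneg _)
  have hmaj : Tendsto (fun k => c * r ^ k * ‖x 0 - xr‖ + bfun k) atTop (nhds 0) := by
    have := (((tendsto_pow_atTop_nhds_zero_of_lt_one hr0.le hr1).const_mul c).mul_const
      ‖x 0 - xr‖).add hbtend
    simpa using this
  have hxe : Tendsto (fun k => x k - xr) atTop (nhds 0) := by
    rw [tendsto_zero_iff_norm_tendsto_zero]
    exact squeeze_zero (fun k => norm_nonneg _) hbound hmaj
  have := hxe.add (tendsto_const_nhds (x := xr))
  simpa using this
end

section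
/- PBH characterization for the incremental (velocity-form) system: with Ā = [[I, C̃ Ã],[0, Ã]] and B̄ = [[C̃ B̃],[B̃]], where Ã is Schur stable, the pair (Ā, B̄) is stabilizable if and only if both rank conditions hold: (i) rank([C̃ Ã, C̃ B̃; Ã - I, B̃]^T) = n + p, and (ii) rank([2I, 0; C̃ Ã, Ã + I; C̃ B̃, B̃]^T) = n + p. -/
set_option maxRecDepth 8000


open Matrix

open Matrix Module Submodule

section aux
variable {F : Type*} [Field F]

lemma myrank_eq_card_iff {ι κ : Type*} [Fintype ι] [Fintype κ] (M : Matrix ι κ F) :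
    M.rank = Fintype.card ι ↔ LinearIndependent F M := by
  rw [rank_eq_finrank_span_row, show LinearIndependent F M ↔ LinearIndependent F M.row from Iff.rfl, linearIndependent_iff_card_eq_finrank_span, Set.finrank, eq_comm]

lemma myrank_le_fromColumns {ι κ₁ κ₂ : Type*} [Fintype ι] [Fintype κ₁] [Fintype κ₂]
    (A : Matrix ι κ₁ F) (B : Matrix ι κ₂ F) : A.rank ≤ (fromCols A B).rank := by
  rw [rank_eq_finrank_span_cols, rank_eq_finrank_span_cols]
  apply Submodule.finrank_mono
  apply Submodule.span_mono
  rintro x ⟨j, rfl⟩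
  exact ⟨Sum.inl j, rfl⟩

lemma myrank_le_fromRows {ι₁ ι₂ κ : Type*} [Fintype ι₁] [Fintype ι₂] [Fintype κ]
    (A : Matrix ι₁ κ F) (B : Matrix ι₂ κ F) : A.rank ≤ (fromRows A B).rank := by
  rw [← rank_transpose A, ← rank_transpose (fromRows A B), transpose_fromRows]
  exact myrank_le_fromColumns _ _

end aux

lemma my_indep_map {ι κ : Type*} [Fintype ι] (v : ι → κ → ℝ) :
    LinearIndependent ℝ v ↔
      LinearIndependent ℂ (fun i => (fun k => ((v i k : ℝ) : ℂ))) := by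
  rw [Fintype.linearIndependent_iff, Fintype.linearIndependent_iff]
  constructor
  · intro h g hg i
    have hk : ∀ k, ∑ j, g j * (v j k : ℂ) = 0 := by
      intro k
      have := congrFun hg k
      simpa using this
    have hre : ∀ i, (g i).re = 0 := h (fun j => (g j).re) (by
      funext k
      have := congrArg Complex.re (hk k)
      simpa [Complex.mul_re] using this)
    have him : ∀ i, (g i).im = 0 := h (fun j => (g j).im) (by
      funext k
      have := congrArg Complex.im (hk k)
      simpa [Complex.mul_im] using this)
    exact Complex.ext (hre i) (him i)
  · intro h g hg i
    have := h (fun j => (g j : ℂ)) (by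
      funext k
      have := congrFun hg k
      push_cast
      simpa using congrArg (Complex.ofReal) this) i
    exact_mod_cast this

noncomputable def myT (n m p : ℕ) : ((Fin n ⊕ Fin m) → ℝ) →ₗ[ℝ] (((Fin p ⊕ Fin n) ⊕ Fin m) → ℝ) where
  toFun w := Sum.elim (Sum.elim (fun _ => 0) (fun k => -w (Sum.inl k))) (fun k => w (Sum.inr k))
  map_add' u v := by funext j; rcases j with (j | j) | j <;> simp <;> ring
  map_smul' c u := by funext j; rcases j with (j | j) | j <;> simp <;> ring

lemma myT_ker (n m p : ℕ) : LinearMap.ker (myT n m p) = ⊥ := by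
  rw [LinearMap.ker_eq_bot']
  intro w hw
  funext k
  rcases k with k | k
  · have := congrFun hw (Sum.inl (Sum.inr k))
    simpa [myT] using this
  · have := congrFun hw (Sum.inr k)
    simpa [myT] using this

section main
variable {n m p : ℕ} (At : Matrix (Fin n) (Fin n) ℝ) (Bt : Matrix (Fin n) (Fin m) ℝ)
    (Ct : Matrix (Fin p) (Fin n) ℝ)

lemma det_shift_ne (hSchur : ∀ μ ∈ spectrum ℂ (At.map (algebraMap ℝ ℂ)), ‖μ‖ < 1)
    (l : ℂ) (hl : 1 ≤ ‖l‖) :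
    (l • (1 : Matrix (Fin n) (Fin n) ℂ) - At.map (algebraMap ℝ ℂ)).det ≠ 0 := by
  intro h0
  have hnu : ¬ IsUnit (l • (1 : Matrix (Fin n) (Fin n) ℂ) - At.map (algebraMap ℝ ℂ)) := by
    rw [Matrix.isUnit_iff_isUnit_det, isUnit_iff_ne_zero]
    simpa using h0
  have hmem : l ∈ spectrum ℂ (At.map (algebraMap ℝ ℂ)) := by
    rw [spectrum.mem_iff, Algebra.algebraMap_eq_smul_one]
    exact hnu
  have := hSchur l hmem
  linarith

lemma detA1_ne (hSchur : ∀ μ ∈ spectrum ℂ (At.map (algebraMap ℝ ℂ)), ‖μ‖ < 1) :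
    (At + 1).det ≠ 0 := by
  intro h0
  have h1 : ((At + 1).map (algebraMap ℝ ℂ)).det = 0 := by
    have := (algebraMap ℝ ℂ).map_det (At + 1)
    rw [RingHom.mapMatrix_apply] at this
    rw [← this, h0, map_zero]
  have h2 : (At + 1).map (algebraMap ℝ ℂ) = At.map (algebraMap ℝ ℂ) + 1 := by
    ext i j
    simp [Matrix.map_apply, Matrix.one_apply, apply_ite]
  have h3 : ((-1 : ℂ) • (1 : Matrix (Fin n) (Fin n) ℂ) - At.map (algebraMap ℝ ℂ)).det = 0 := by
    have : (-1 : ℂ) • (1 : Matrix (Fin n) (Fin n) ℂ) - At.map (algebraMap ℝ ℂ)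
        = (-1 : ℂ) • (At.map (algebraMap ℝ ℂ) + 1) := by
      ext i j
      by_cases h : i = j <;> simp [h, Matrix.one_apply, Matrix.map_apply] <;> ring
    rw [this, Matrix.det_smul, ← h2, h1, mul_zero]
  exact det_shift_ne At hSchur (-1) (by norm_num) h3

lemma cond_ii_holds (hSchur : ∀ μ ∈ spectrum ℂ (At.map (algebraMap ℝ ℂ)), ‖μ‖ < 1) :
    (Matrix.fromRows
      (Matrix.fromBlocks ((2 : ℝ) • (1 : Matrix (Fin p) (Fin p) ℝ)) 0 (Ct * At)ᵀ (Atᵀ + 1))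
      (Matrix.fromCols (Ct * Bt)ᵀ Btᵀ)).rank = n + p := by
  set S := Matrix.fromBlocks ((2 : ℝ) • (1 : Matrix (Fin p) (Fin p) ℝ)) 0 (Ct * At)ᵀ (Atᵀ + 1)
  have hdet : S.det ≠ 0 := by
    rw [Matrix.det_fromBlocks_zero₁₂]
    apply mul_ne_zero
    · rw [Matrix.det_smul]
      simp
    · have : (Atᵀ + 1) = (At + 1)ᵀ := by simp [Matrix.transpose_add]
      rw [this, Matrix.det_transpose]
      exact detA1_ne At hSchur
  have hS : S.rank = p + n := by
    rw [Matrix.rank_of_isUnit S (Matrix.isUnit_iff_isUnit_det S |>.mpr (isUnit_iff_ne_zero.mpr hdet))]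
    simp
  have hle : (Matrix.fromRows S (Matrix.fromCols (Ct * Bt)ᵀ Btᵀ)).rank ≤ p + n := by
    have := Matrix.rank_le_card_width (Matrix.fromRows S (Matrix.fromCols (Ct * Bt)ᵀ Btᵀ))
    simpa using this
  have hge := myrank_le_fromRows S (Matrix.fromCols (Ct * Bt)ᵀ Btᵀ)
  omega

lemma generic_full_rank (hSchur : ∀ μ ∈ spectrum ℂ (At.map (algebraMap ℝ ℂ)), ‖μ‖ < 1)
    (l : ℂ) (hl : 1 ≤ ‖l‖) (hne : l ≠ 1) :
    (Matrix.fromCols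
      (l • (1 : Matrix (Fin p ⊕ Fin n) (Fin p ⊕ Fin n) ℂ) -
        (Matrix.fromBlocks 1 (Ct * At) 0 At).map (algebraMap ℝ ℂ))
      ((Matrix.fromRows (Ct * Bt) Bt).map (algebraMap ℝ ℂ))).rank = n + p := by
  set f := algebraMap ℝ ℂ
  set Q := l • (1 : Matrix (Fin p ⊕ Fin n) (Fin p ⊕ Fin n) ℂ) -
      (Matrix.fromBlocks 1 (Ct * At) 0 At).map f with hQ
  have hQeq : Q = Matrix.fromBlocks (l • 1 - 1) (-(Ct * At).map f) 0 (l • 1 - At.map f) := by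
    ext i j
    rcases i with i | i <;> rcases j with j | j <;>
      simp [hQ, Matrix.one_apply, Matrix.map_apply, -Matrix.map_mul]
  have hdet1 : (l • (1 : Matrix (Fin p) (Fin p) ℂ) - 1).det ≠ 0 := by
    have h5 : l • (1 : Matrix (Fin p) (Fin p) ℂ) - 1 = (l - 1) • 1 := by
      rw [sub_smul, one_smul]
    rw [h5, Matrix.det_smul]
    simp [sub_ne_zero.mpr hne]
  have hdet : Q.det ≠ 0 := by
    rw [hQeq, Matrix.det_fromBlocks_zero₂₁]
    exact mul_ne_zero hdet1 (det_shift_ne At hSchur l hl)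
  have hQrank : Q.rank = p + n := by
    rw [Matrix.rank_of_isUnit Q (Matrix.isUnit_iff_isUnit_det Q |>.mpr (isUnit_iff_ne_zero.mpr hdet))]
    simp
  have hge := myrank_le_fromColumns Q ((Matrix.fromRows (Ct * Bt) Bt).map f)
  have hle : (Matrix.fromCols Q ((Matrix.fromRows (Ct * Bt) Bt).map f)).rank ≤ p + n := by
    have := Matrix.rank_le_card_height (Matrix.fromCols Q ((Matrix.fromRows (Ct * Bt) Bt).map f))
    simpa using this
  omega

lemma at_one_iff :
    (Matrix.fromCols
      ((1 : ℂ) • (1 : Matrix (Fin p ⊕ Fin n) (Fin p ⊕ Fin n) ℂ) -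
        (Matrix.fromBlocks 1 (Ct * At) 0 At).map (algebraMap ℝ ℂ))
      ((Matrix.fromRows (Ct * Bt) Bt).map (algebraMap ℝ ℂ))).rank = n + p ↔
    (Matrix.fromBlocks (Ct * At) (Ct * Bt) (At - 1) Bt)ᵀ.rank = n + p := by
  set f := algebraMap ℝ ℂ
  set K₂ := Matrix.fromBlocks (Ct * At) (Ct * Bt) (At - 1) Bt with hK₂
  set K₁ := Matrix.fromCols
      (Matrix.fromBlocks (0 : Matrix (Fin p) (Fin p) ℝ) (-(Ct * At)) 0 (1 - At))
      (Matrix.fromRows (Ct * Bt) Bt) with hK₁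
  have hM : Matrix.fromCols
      ((1 : ℂ) • (1 : Matrix (Fin p ⊕ Fin n) (Fin p ⊕ Fin n) ℂ) -
        (Matrix.fromBlocks 1 (Ct * At) 0 At).map f)
      ((Matrix.fromRows (Ct * Bt) Bt).map f) = K₁.map f := by
    have hA : (1 : ℂ) • (1 : Matrix (Fin p ⊕ Fin n) (Fin p ⊕ Fin n) ℂ) -
        (Matrix.fromBlocks 1 (Ct * At) 0 At).map f
        = (Matrix.fromBlocks (0 : Matrix (Fin p) (Fin p) ℝ) (-(Ct * At)) 0 (1 - At)).map f := by
      ext i j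
      rcases i with i | i <;> rcases j with j | j
      · by_cases h : i = j <;> simp [h, Matrix.one_apply, Matrix.map_apply, -Matrix.map_mul]
      · simp [Matrix.one_apply, Matrix.map_apply, -Matrix.map_mul]
      · simp [Matrix.one_apply, Matrix.map_apply, -Matrix.map_mul]
      · by_cases h : i = j <;> simp [h, Matrix.one_apply, Matrix.map_apply, -Matrix.map_mul]
    have hfc : ∀ (X : Matrix (Fin p ⊕ Fin n) (Fin p ⊕ Fin n) ℝ)
        (Y : Matrix (Fin p ⊕ Fin n) (Fin m) ℝ),
        Matrix.fromCols (X.map f) (Y.map f) = (Matrix.fromCols X Y).map f := by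
      intro X Y
      ext i j
      rcases j with j | j <;> simp [Matrix.map_apply, -Matrix.map_mul]
    rw [hA, hfc]
  rw [hM, Matrix.rank_transpose]
  have hmapRows : K₁.map f = fun i k => ((K₁ i k : ℝ) : ℂ) := by
    funext i k
    simp [Matrix.map_apply, f, Complex.coe_algebraMap]
  have h2 : LinearIndependent ℂ (K₁.map f) ↔ LinearIndependent ℝ (K₁ : _ → _ → ℝ) := by
    rw [hmapRows]
    exact (my_indep_map K₁).symm
  have hcomp : (K₁ : _ → _ → ℝ) = ⇑(myT n m p) ∘ (K₂ : _ → _ → ℝ) := by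
    funext i
    change K₁ i = myT n m p (K₂ i)
    rcases i with i | i <;> funext j <;> rcases j with (j | j) | j <;>
      simp [hK₁, hK₂, myT]
  have h3 : LinearIndependent ℝ (K₁ : _ → _ → ℝ) ↔ LinearIndependent ℝ (K₂ : _ → _ → ℝ) := by
    rw [hcomp]
    exact LinearMap.linearIndependent_iff (myT n m p) (myT_ker n m p)
  have hc1 := myrank_eq_card_iff (K₁.map f)
  have hc2 := myrank_eq_card_iff K₂
  simp only [Fintype.card_sum, Fintype.card_fin] at hc1 hc2
  constructor
  · intro h
    have := hc2.mpr (h3.mp (h2.mp (hc1.mp (by omega))))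
    omega
  · intro h
    have := hc1.mpr (h2.mpr (h3.mpr (hc2.mp (by omega))))
    omega

end main

/-- PBH characterization for the incremental (velocity-form) system:
(Ā, B̄) with Ā = [[I, C̃Ã],[0, Ã]], B̄ = [[C̃B̃],[B̃]] (Ã Schur stable) is stabilizable
iff the two rank conditions hold. -/
theorem incremental_pbh_characterization {n m p : ℕ}
    (At : Matrix (Fin n) (Fin n) ℝ) (Bt : Matrix (Fin n) (Fin m) ℝ)
    (Ct : Matrix (Fin p) (Fin n) ℝ)
    (hSchur : ∀ μ ∈ spectrum ℂ (At.map (algebraMap ℝ ℂ)), ‖μ‖ < 1) :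
    (∀ l : ℂ, 1 ≤ ‖l‖ →
        (Matrix.fromCols
          (l • (1 : Matrix (Fin p ⊕ Fin n) (Fin p ⊕ Fin n) ℂ) -
            (Matrix.fromBlocks 1 (Ct * At) 0 At).map (algebraMap ℝ ℂ))
          ((Matrix.fromRows (Ct * Bt) Bt).map (algebraMap ℝ ℂ))).rank = n + p) ↔
      ((Matrix.fromBlocks (Ct * At) (Ct * Bt) (At - 1) Bt)ᵀ.rank = n + p ∧
        (Matrix.fromRows
          (Matrix.fromBlocks ((2 : ℝ) • (1 : Matrix (Fin p) (Fin p) ℝ)) 0 (Ct * At)ᵀ (Atᵀ + 1))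
          (Matrix.fromCols (Ct * Bt)ᵀ Btᵀ)).rank = n + p) := by
  constructor
  · intro H
    refine ⟨?_, cond_ii_holds At Bt Ct hSchur⟩
    exact (at_one_iff At Bt Ct).mp (H 1 (by norm_num))
  · rintro ⟨h1, -⟩ l hl
    by_cases hl1 : l = 1
    · subst hl1
      exact (at_one_iff At Bt Ct).mpr h1
    · exact generic_full_rank At Bt Ct hSchur l hl hl1
end

section
/- Convergence of incremental form implies convergence of absolute variables: if Δu(k) = u(k) - u(k-1) → 0 and y(k) → y_r where y(k) = C x(k) and x(k+1) = A x(k) + B u(k), with (A, C) detectable, Φ = [[I - A, -B],[C, 0]] invertible, and x(k), u(k) bounded, then u(k) converges to the unique u_r and x(k) converges to the unique x_r satisfying x_r = A x_r + B u_r, C x_r = y_r. -/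
open Filter Matrix
open scoped ENNReal NNReal Topology

section Aux

attribute [local instance]
  Matrix.linftyOpNormedAddCommGroup Matrix.linftyOpNormedRing Matrix.linftyOpNormedAlgebra

private lemma aux_nnnorm_map {n : ℕ} (M : Matrix (Fin n) (Fin n) ℝ) :
    ‖M.map (algebraMap ℝ ℂ)‖₊ = ‖M‖₊ := by
  simp [Matrix.linfty_opNNNorm_def, Matrix.map_apply, Complex.coe_algebraMap]

private lemma aux_pow_small {n : ℕ} (M : Matrix (Fin n) (Fin n) ℝ)
    (h : ∀ μ ∈ spectrum ℂ (M.map (algebraMap ℝ ℂ)), ‖μ‖ < 1) :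
    ∀ ε : ℝ, 0 < ε → ∃ N, ∀ v : Fin n → ℝ, ‖(M ^ N).mulVec v‖ ≤ ε * ‖v‖ := by
  intro ε hε
  set Mc := M.map (algebraMap ℝ ℂ) with hMcdef
  haveI : CompleteSpace (Matrix (Fin n) (Fin n) ℂ) :=
    FiniteDimensional.complete ℂ (Matrix (Fin n) (Fin n) ℂ)
  have hρ : spectralRadius ℂ Mc < 1 := by
    rcases Set.eq_empty_or_nonempty (spectrum ℂ Mc) with he | hne
    · rw [spectralRadius]
      simp [he]
    · have := spectrum.spectralRadius_lt_of_forall_lt_of_nonempty hne (r := 1)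
        (fun k hk => by
          have := h k hk
          simpa [← NNReal.coe_lt_coe] using this)
      simpa using this
  obtain ⟨t, ht1, ht2⟩ := exists_between hρ
  have hgel := spectrum.pow_nnnorm_pow_one_div_tendsto_nhds_spectralRadius Mc
  have hev : ∀ᶠ k : ℕ in atTop, (‖Mc ^ k‖₊ : ℝ≥0∞) ^ (1 / (k : ℝ)) < t :=
    hgel.eventually_lt_const ht1
  have hbound : ∀ᶠ k in atTop, (‖Mc ^ k‖₊ : ℝ≥0∞) ≤ t ^ k := by
    filter_upwards [hev, eventually_ge_atTop 1] with k hk hk1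
    have hk0 : (k : ℝ) ≠ 0 := by positivity
    have : ((‖Mc ^ k‖₊ : ℝ≥0∞) ^ (1 / (k : ℝ))) ^ (k : ℕ) ≤ t ^ k :=
      pow_le_pow_left' hk.le k
    calc (‖Mc ^ k‖₊ : ℝ≥0∞) = ((‖Mc ^ k‖₊ : ℝ≥0∞) ^ (1 / (k : ℝ))) ^ (k : ℕ) := by
          rw [← ENNReal.rpow_natCast (((‖Mc ^ k‖₊ : ℝ≥0∞)) ^ (1 / (k : ℝ))) k,
            ← ENNReal.rpow_mul, one_div, inv_mul_cancel₀ hk0, ENNReal.rpow_one]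
      _ ≤ t ^ k := this
  have hpow : Tendsto (fun k : ℕ => t ^ k) atTop (𝓝 (0 : ℝ≥0∞)) :=
    ENNReal.tendsto_pow_atTop_nhds_zero_of_lt_one ht2
  have htend : Tendsto (fun k : ℕ => (‖Mc ^ k‖₊ : ℝ≥0∞)) atTop (𝓝 0) :=
    tendsto_of_tendsto_of_tendsto_of_le_of_le' tendsto_const_nhds hpow
      (Eventually.of_forall fun k => zero_le) hbound
  set ε' : ℝ≥0 := ε.toNNReal with hε'def
  have hε' : (0 : ℝ≥0∞) < (ε' : ℝ≥0∞) := by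
    simp [hε'def, Real.toNNReal_pos.2 hε]
  obtain ⟨N, hN⟩ := (htend.eventually_lt_const hε').exists
  refine ⟨N, fun v => ?_⟩
  have hMN : ‖M ^ N‖₊ < ε' := by
    have : ‖Mc ^ N‖₊ < ε' := by exact_mod_cast hN
    have hmap : Mc ^ N = (M ^ N).map (algebraMap ℝ ℂ) := by
      rw [hMcdef, ← RingHom.mapMatrix_apply, ← RingHom.mapMatrix_apply, ← map_pow]
    rwa [hmap, aux_nnnorm_map] at this
  have h1 : ‖(M ^ N).mulVec v‖ ≤ ‖M ^ N‖ * ‖v‖ := Matrix.linfty_opNorm_mulVec _ _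
  have h2 : ‖M ^ N‖ ≤ ε := by
    have : (‖M ^ N‖₊ : ℝ) ≤ (ε' : ℝ) := by exact_mod_cast hMN.le
    simpa [hε'def, Real.coe_toNNReal _ hε.le] using this
  exact h1.trans (mul_le_mul_of_nonneg_right h2 (norm_nonneg v))

end Aux

private lemma aux_perturbed {n : ℕ} (M : Matrix (Fin n) (Fin n) ℝ)
    (hM : ∀ ε : ℝ, 0 < ε → ∃ N, ∀ v : Fin n → ℝ, ‖(M ^ N).mulVec v‖ ≤ ε * ‖v‖)
    (z w : ℕ → Fin n → ℝ) (Z : ℝ) (hz : ∀ k, ‖z k‖ ≤ Z)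
    (hrec : ∀ k, z (k + 1) = M.mulVec (z k) + w k)
    (hw : Filter.Tendsto w atTop (nhds 0)) : Filter.Tendsto z atTop (nhds 0) := by
  have hcont : ∀ (P : Matrix (Fin n) (Fin n) ℝ), Continuous fun v : Fin n → ℝ => P.mulVec v := by
    intro P
    have := LinearMap.continuous_of_finiteDimensional (Matrix.mulVecLin P)
    exact this
  set e : ℕ → ℕ → Fin n → ℝ :=
    fun N k => Nat.rec (0 : Fin n → ℝ) (fun j ej => M.mulVec ej + w (k + j)) N with he
  have claim1 : ∀ N k, z (k + N) = (M ^ N).mulVec (z k) + e N k := by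
    intro N
    induction N with
    | zero => intro k; simp [he, Matrix.one_mulVec]
    | succ N ih =>
      intro k
      have hzk : z (k + (N + 1)) = z ((k + N) + 1) := by ring_nf
      rw [hzk, hrec (k + N), ih k]
      have : e (N + 1) k = M.mulVec (e N k) + w (k + N) := rfl
      rw [this, Matrix.mulVec_add, pow_succ', ← Matrix.mulVec_mulVec]
      abel
  have claim2 : ∀ N, Tendsto (fun k => e N k) atTop (nhds 0) := by
    intro N
    induction N with
    | zero => simpa [he] using (tendsto_const_nhds : Tendsto (fun _ : ℕ => (0 : Fin n → ℝ)) atTop _)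
    | succ N ih =>
      have h1 : Tendsto (fun k => M.mulVec (e N k)) atTop (nhds 0) := by
        have := ((hcont M).tendsto 0).comp ih
        simpa [Matrix.mulVec_zero, Function.comp_def] using this
      have h2 : Tendsto (fun k => w (k + N)) atTop (nhds 0) :=
        hw.comp (tendsto_add_atTop_nat N)
      have := h1.add h2
      simpa using this
  rw [NormedAddCommGroup.tendsto_nhds_zero]
  intro ε hε
  have hZ0 : 0 ≤ Z := le_trans (norm_nonneg _) (hz 0)
  obtain ⟨N, hN⟩ := hM (ε / (2 * (Z + 1))) (by positivity)
  have hN' : ∀ k, ‖(M ^ N).mulVec (z k)‖ ≤ ε / 2 := by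
    intro k
    calc ‖(M ^ N).mulVec (z k)‖ ≤ ε / (2 * (Z + 1)) * ‖z k‖ := hN _
      _ ≤ ε / (2 * (Z + 1)) * (Z + 1) :=
          mul_le_mul_of_nonneg_left (by have := hz k; linarith) (by positivity)
      _ = ε / 2 := by field_simp
  have he' := (NormedAddCommGroup.tendsto_nhds_zero.mp (claim2 N)) (ε / 2) (by positivity)
  obtain ⟨K, hK⟩ := eventually_atTop.mp he'
  refine eventually_atTop.2 ⟨K + N, fun j hj => ?_⟩
  have hkN : (j - N) + N = j := by omega
  have hkK : K ≤ j - N := by omega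
  have hc1 := claim1 N (j - N)
  rw [hkN] at hc1
  calc ‖z j‖ = ‖(M ^ N).mulVec (z (j - N)) + e N (j - N)‖ := by rw [hc1]
    _ ≤ ‖(M ^ N).mulVec (z (j - N))‖ + ‖e N (j - N)‖ := norm_add_le _ _
    _ < ε / 2 + ε / 2 := by
        have := hK (j - N) hkK
        have h2 := hN' (j - N)
        linarith
    _ = ε := by ring

/-- Convergence of the incremental form implies convergence of the absolute variables:
if Δu(k) → 0 and y(k) → y_r, with (A,C) detectable, Φ invertible, and bounded trajectories,
then u(k) → u_r and x(k) → x_r for the unique steady state (x_r, u_r). -/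
theorem incremental_convergence {n m : ℕ}
    (A : Matrix (Fin n) (Fin n) ℝ) (B : Matrix (Fin n) (Fin m) ℝ) (C : Matrix (Fin m) (Fin n) ℝ)
    (hdet : ∃ L : Matrix (Fin n) (Fin m) ℝ,
      ∀ μ ∈ spectrum ℂ ((A - L * C).map (algebraMap ℝ ℂ)), ‖μ‖ < 1)
    (hΦ : IsUnit (Matrix.fromBlocks (1 - A) (-B) C 0))
    (x : ℕ → Fin n → ℝ) (u : ℕ → Fin m → ℝ) (y : ℕ → Fin m → ℝ) (yr : Fin m → ℝ)
    (hdyn : ∀ k, x (k + 1) = A.mulVec (x k) + B.mulVec (u k))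
    (hout : ∀ k, y k = C.mulVec (x k))
    (hΔu : Filter.Tendsto (fun k => u (k + 1) - u k) Filter.atTop (nhds 0))
    (hy : Filter.Tendsto y Filter.atTop (nhds yr))
    (hxbdd : ∃ M : ℝ, ∀ k, ‖x k‖ ≤ M) (hubdd : ∃ M : ℝ, ∀ k, ‖u k‖ ≤ M) :
    ∃ (xr : Fin n → ℝ) (ur : Fin m → ℝ),
      (xr = A.mulVec xr + B.mulVec ur ∧ C.mulVec xr = yr) ∧
      Filter.Tendsto u Filter.atTop (nhds ur) ∧
      Filter.Tendsto x Filter.atTop (nhds xr) ∧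
      ∀ (xr' : Fin n → ℝ) (ur' : Fin m → ℝ),
        (xr' = A.mulVec xr' + B.mulVec ur' ∧ C.mulVec xr' = yr) → xr' = xr ∧ ur' = ur := by
  classical
  have hcont : ∀ {p q : Type} [Fintype p] [Fintype q] [DecidableEq p] [DecidableEq q]
      (P : Matrix p q ℝ), Continuous fun v : q → ℝ => P.mulVec v := by
    intro p q _ _ _ _ P
    have := LinearMap.continuous_of_finiteDimensional (Matrix.mulVecLin P)
    exact this
  obtain ⟨L, hL⟩ := hdet
  set M : Matrix (Fin n) (Fin n) ℝ := A - L * C with hM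
  -- incremental variables
  set z : ℕ → Fin n → ℝ := fun k => x (k + 1) - x k with hzdef
  set w : ℕ → Fin n → ℝ :=
    fun k => L.mulVec (y (k + 1) - y k) + B.mulVec (u (k + 1) - u k) with hwdef
  have hyz : ∀ k, y (k + 1) - y k = C.mulVec (z k) := by
    intro k
    rw [hout (k + 1), hout k, hzdef]
    simp only [Matrix.mulVec_sub]
  have hrec : ∀ k, z (k + 1) = M.mulVec (z k) + w k := by
    intro k
    have h1 : z (k + 1) = A.mulVec (z k) + B.mulVec (u (k + 1) - u k) := by
      simp only [hzdef]
      rw [hdyn (k + 1), hdyn k, Matrix.mulVec_sub, Matrix.mulVec_sub]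
      abel
    rw [h1]
    simp only [hwdef]
    rw [hyz k, hM, Matrix.sub_mulVec, ← Matrix.mulVec_mulVec]
    abel
  obtain ⟨Mx, hMx⟩ := hxbdd
  have hzbdd : ∀ k, ‖z k‖ ≤ Mx + Mx := by
    intro k
    calc ‖z k‖ ≤ ‖x (k + 1)‖ + ‖x k‖ := norm_sub_le _ _
      _ ≤ Mx + Mx := add_le_add (hMx _) (hMx _)
  have hwten : Tendsto w atTop (nhds 0) := by
    have hy1 : Tendsto (fun k => y (k + 1) - y k) atTop (nhds 0) := by
      have := (hy.comp (tendsto_add_atTop_nat 1)).sub hy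
      simpa using this
    have h1 : Tendsto (fun k => L.mulVec (y (k + 1) - y k)) atTop (nhds 0) := by
      have := ((hcont L).tendsto 0).comp hy1
      simpa [Matrix.mulVec_zero, Function.comp_def] using this
    have h2 : Tendsto (fun k => B.mulVec (u (k + 1) - u k)) atTop (nhds 0) := by
      have := ((hcont B).tendsto 0).comp hΔu
      simpa [Matrix.mulVec_zero, Function.comp_def] using this
    have := h1.add h2
    simpa using this
  have hz0 : Tendsto z atTop (nhds 0) :=
    aux_perturbed M (aux_pow_small M hL) z w (Mx + Mx) hzbdd hrec hwten
  -- steady-state via Φ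
  set Φ : Matrix (Fin n ⊕ Fin m) (Fin n ⊕ Fin m) ℝ := Matrix.fromBlocks (1 - A) (-B) C 0 with hΦdef
  obtain ⟨Φu, hΦu⟩ := hΦ
  set Ψ : Matrix (Fin n ⊕ Fin m) (Fin n ⊕ Fin m) ℝ := ↑Φu⁻¹ with hΨdef
  have hΨΦ : Ψ * Φ = 1 := by rw [hΨdef, ← hΦu]; exact Φu.inv_mul
  have hΦΨ : Φ * Ψ = 1 := by rw [hΨdef, ← hΦu]; exact Φu.mul_inv
  set s : ℕ → (Fin n ⊕ Fin m) → ℝ := fun k => Sum.elim (x k) (u k) with hsdef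
  set b : ℕ → (Fin n ⊕ Fin m) → ℝ := fun k => Sum.elim (x k - x (k + 1)) (y k) with hbdef
  have hΦs : ∀ k, Φ.mulVec (s k) = b k := by
    intro k
    have hb : b k = Sum.elim (x k - x (k + 1)) (y k) := rfl
    have hl : (s k) ∘ Sum.inl = x k := rfl
    have hr : (s k) ∘ Sum.inr = u k := rfl
    have hc1 : (1 - A).mulVec (x k) + (-B).mulVec (u k) = x k - x (k + 1) := by
      rw [hdyn k, Matrix.sub_mulVec, Matrix.one_mulVec, Matrix.neg_mulVec]
      abel
    have hc2 : C.mulVec (x k) + (0 : Matrix (Fin m) (Fin m) ℝ).mulVec (u k) = y k := by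
      rw [hout k, Matrix.zero_mulVec, add_zero]
    rw [hΦdef, Matrix.fromBlocks_mulVec, hl, hr, hc1, hc2, hb]
  have hs : ∀ k, s k = Ψ.mulVec (b k) := by
    intro k
    rw [← hΦs k, Matrix.mulVec_mulVec, hΨΦ, Matrix.one_mulVec]
  have hbten : Tendsto b atTop (nhds (Sum.elim (0 : Fin n → ℝ) yr)) := by
    rw [tendsto_pi_nhds]
    intro i
    cases i with
    | inl i =>
      have hzi := tendsto_pi_nhds.mp hz0 i
      have := hzi.neg
      simp only [Pi.zero_apply, neg_zero] at this
      have heq : (fun k => -(z k i)) = fun k => b k (Sum.inl i) := by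
        funext k
        simp [hbdef, hzdef]
      rw [heq] at this
      simpa using this
    | inr j =>
      have := tendsto_pi_nhds.mp hy j
      simpa [hbdef] using this
  set sinf : (Fin n ⊕ Fin m) → ℝ := Ψ.mulVec (Sum.elim (0 : Fin n → ℝ) yr) with hsinf
  have hsten : Tendsto s atTop (nhds sinf) := by
    have := ((hcont Ψ).tendsto (Sum.elim (0 : Fin n → ℝ) yr)).comp hbten
    have heq : (fun k => Ψ.mulVec (b k)) = s := by funext k; rw [← hs k]
    rw [← heq]
    exact this
  set xr : Fin n → ℝ := fun i => sinf (Sum.inl i) with hxr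
  set ur : Fin m → ℝ := fun j => sinf (Sum.inr j) with hur
  have hse : Sum.elim xr ur = sinf := by funext i; cases i <;> rfl
  have hΦsinf : Φ.mulVec sinf = Sum.elim (0 : Fin n → ℝ) yr := by
    rw [hsinf, Matrix.mulVec_mulVec, hΦΨ, Matrix.one_mulVec]
  have hblocks : ∀ (p : Fin n → ℝ) (q : Fin m → ℝ),
      Φ.mulVec (Sum.elim p q) =
        Sum.elim ((1 - A).mulVec p + (-B).mulVec q) (C.mulVec p + (0 : Matrix (Fin m) (Fin m) ℝ).mulVec q) := by
    intro p q
    rw [hΦdef, Matrix.fromBlocks_mulVec]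
    rfl
  have hsteady : xr = A.mulVec xr + B.mulVec ur ∧ C.mulVec xr = yr := by
    have h := hΦsinf
    rw [← hse, hblocks] at h
    constructor
    · have h1 : (1 - A).mulVec xr + (-B).mulVec ur = 0 := by
        funext i
        exact congrFun h (Sum.inl i)
      rw [Matrix.sub_mulVec, Matrix.one_mulVec, Matrix.neg_mulVec] at h1
      have : xr - (A.mulVec xr + B.mulVec ur) = 0 := by
        rw [← h1]; abel
      have := sub_eq_zero.mp this
      exact this
    · have h2 : C.mulVec xr + (0 : Matrix (Fin m) (Fin m) ℝ).mulVec ur = yr := by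
        funext j
        exact congrFun h (Sum.inr j)
      rwa [Matrix.zero_mulVec, add_zero] at h2
  refine ⟨xr, ur, hsteady, ?_, ?_, ?_⟩
  · rw [tendsto_pi_nhds]
    intro j
    exact tendsto_pi_nhds.mp hsten (Sum.inr j)
  · rw [tendsto_pi_nhds]
    intro i
    exact tendsto_pi_nhds.mp hsten (Sum.inl i)
  · rintro xr' ur' ⟨h1, h2⟩
    have hb' : Φ.mulVec (Sum.elim xr' ur') = Sum.elim (0 : Fin n → ℝ) yr := by
      have hc1 : (1 - A).mulVec xr' + (-B).mulVec ur' = (0 : Fin n → ℝ) := by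
        rw [Matrix.sub_mulVec, Matrix.one_mulVec, Matrix.neg_mulVec]
        nth_rewrite 1 [h1]
        abel
      have hc2 : C.mulVec xr' + (0 : Matrix (Fin m) (Fin m) ℝ).mulVec ur' = yr := by
        rw [Matrix.zero_mulVec, add_zero, h2]
      rw [hblocks, hc1, hc2]
    have hs' : Sum.elim xr' ur' = sinf := by
      have : Ψ.mulVec (Φ.mulVec (Sum.elim xr' ur')) = Sum.elim xr' ur' := by
        rw [Matrix.mulVec_mulVec, hΨΦ, Matrix.one_mulVec]
      rw [← this, hb', hsinf]
    constructor
    · funext i; exact congrFun hs' (Sum.inl i)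
    · funext j; exact congrFun hs' (Sum.inr j)
end
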